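/- Let x be a string not containing the symbol 7 and let y = 7^{|x|} ++ y2 ++ 7^{|x|} where y2 also does not contain the symbol 7. Then δ(x,y) = 2|x| + min over all ways of writing x = x1 ++ x2 ++ x3 of δ(x2, y2). -/

import Mathlib

/-! Levenshtein distance, as it stood in Mathlib (Mathlib/Data/List/EditDistance/Defs.lean),
which has since been removed from Mathlib. -/

section Levenshtein

variable {α β δ : Type*} [AddZeroClass δ] [Min δ]

namespace Levenshtein

/-- A cost function for Levenshtein distance. -/
structure Cost (α β δ : Type*) where
  /-- Cost to delete an element from a list. -/
  delete : α → δ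
  /-- Cost in insert an element into a list. -/
  insert : β → δ
  /-- Cost to substitute one element for another in a list. -/
  substitute : α → β → δ

/-- The default cost structure, for which the cost is `1` for any operation. -/
def defaultCost [DecidableEq α] : Cost α α ℕ where
  delete _ := 1
  insert _ := 1
  substitute a b := if a = b then 0 else 1

variable (C : Cost α β δ)

/-- (Implementation detail) -/
def impl
    (xs : List α) (y : β) (d : {r : List δ // 0 < r.length}) : {r : List δ // 0 < r.length} :=
  let ⟨ds, w⟩ := d
  xs.zip (ds.zip ds.tail) |>.foldr
    (init := ⟨[ds.getLast (List.length_pos_iff.mp w) + C.insert y], by simp⟩)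
    (fun ⟨x, d₀, d₁⟩ ⟨r, w⟩ =>
      ⟨min (C.delete x + r[0]) (min (C.insert y + d₀) (C.substitute x y + d₁)) :: r, by simp⟩)

end Levenshtein

open Levenshtein

variable (C : Levenshtein.Cost α β δ)

/-- `suffixLevenshtein C xs ys` computes the Levenshtein distance
(using the cost functions provided by a `C : Cost α β δ`)
from each suffix of the list `xs` to the list `ys`. -/
def suffixLevenshtein (xs : List α) (ys : List β) : {r : List δ // 0 < r.length} :=
  ys.foldr
    (impl C xs)
    (xs.foldr (init := ⟨[0], by simp⟩) (fun a ⟨r, w⟩ => ⟨(C.delete a + r[0]) :: r, by simp⟩))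

/-- `levenshtein C xs ys` computes the Levenshtein distance
(using the cost functions provided by a `C : Cost α β δ`)
from the list `xs` to the list `ys`. -/
def levenshtein (xs : List α) (ys : List β) : δ :=
  let ⟨r, w⟩ := suffixLevenshtein C xs ys
  r[0]

end Levenshtein

/-- Unit-cost edit distance between two lists over a decidable-eq alphabet. -/
def editDist (a b : List ℕ) : ℕ :=
  levenshtein Levenshtein.defaultCost a b

section LevenshteinAPI

open Levenshtein

variable {α β δ : Type*} [AddZeroClass δ] [Min δ] {C : Levenshtein.Cost α β δ}

@[simp] theorem Levenshtein.defaultCost_delete' [DecidableEq α] (a : α) :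
    (Levenshtein.defaultCost : Cost α α ℕ).delete a = 1 := rfl
@[simp] theorem Levenshtein.defaultCost_insert' [DecidableEq α] (a : α) :
    (Levenshtein.defaultCost : Cost α α ℕ).insert a = 1 := rfl
@[simp] theorem Levenshtein.defaultCost_substitute' [DecidableEq α] (a b : α) :
    (Levenshtein.defaultCost : Cost α α ℕ).substitute a b = if a = b then 0 else 1 := rfl

theorem Levenshtein.impl_cons' (x : α) (xs : List α) (y : β) (d : δ) (ds : List δ)
    (w : 0 < (d :: ds).length) (w' : 0 < List.length ds) :
    impl C (x :: xs) y ⟨d :: ds, w⟩ =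
      let ⟨r, w⟩ := impl C xs y ⟨ds, w'⟩
      ⟨min (C.delete x + r[0]) (min (C.insert y + d) (C.substitute x y + ds[0])) :: r, by simp⟩ :=
  match ds, w' with | _ :: _, _ => rfl

theorem Levenshtein.impl_length' (xs : List α) (y : β) (d : {r : List δ // 0 < r.length})
    (w : d.1.length = xs.length + 1) :
    (impl C xs y d).1.length = xs.length + 1 := by
  induction xs generalizing d with
  | nil => rfl
  | cons x xs ih =>
    dsimp [impl]
    match d, w with
    | ⟨d₁ :: d₂ :: ds, _⟩, w =>
      dsimp
      congr 1
      exact ih ⟨d₂ :: ds, (by simp)⟩ (by simpa using w)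

theorem suffixLevenshtein_length' (xs : List α) (ys : List β) :
    (suffixLevenshtein C xs ys).1.length = xs.length + 1 := by
  induction ys with
  | nil =>
    dsimp [suffixLevenshtein]
    induction xs with
    | nil => rfl
    | cons _ xs ih => simp_all
  | cons y ys ih =>
    dsimp [suffixLevenshtein]
    rw [Levenshtein.impl_length']
    exact ih

theorem suffixLevenshtein_cons₂' (xs : List α) (y : β) (ys : List β) :
    suffixLevenshtein C xs (y :: ys) = (impl C xs) y (suffixLevenshtein C xs ys) :=
  rfl

theorem suffixLevenshtein_cons₁_aux' {α} {x y : { l : List α // 0 < l.length }}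
    (w₀ : x.1[0]'x.2 = y.1[0]'y.2) (w : x.1.tail = y.1.tail) : x = y := by
  match x, y with
  | ⟨hx :: tx, _⟩, ⟨hy :: ty, _⟩ => simp_all

theorem suffixLevenshtein_cons₁' (x : α) (xs : List α) (ys : List β) :
    suffixLevenshtein C (x :: xs) ys =
      ⟨levenshtein C (x :: xs) ys :: (suffixLevenshtein C xs ys).1, by simp⟩ := by
  induction ys with
  | nil => rfl
  | cons y ys ih =>
    apply suffixLevenshtein_cons₁_aux'
    · rfl
    · rw [suffixLevenshtein_cons₂' (x :: xs), ih, Levenshtein.impl_cons']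
      · rfl
      · simp [suffixLevenshtein_length']

@[simp] theorem levenshtein_nil_nil : levenshtein C [] [] = 0 := by
  simp [levenshtein, suffixLevenshtein]

@[simp] theorem levenshtein_nil_cons (y : β) (ys : List β) :
    levenshtein C [] (y :: ys) = levenshtein C [] ys + C.insert y := by
  have key : ∀ (s : {r : List δ // 0 < r.length}) (_hs : s.1.length = 1) w,
      (impl C [] y s).1[0]'w = s.1[0]'s.2 + C.insert y := by
    rintro ⟨r, w⟩ hs w'
    match r, w, hs with
    | [a], _, _ => simp [impl]
    | _ :: _ :: _, _, hs => simp at hs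
  exact key _ (suffixLevenshtein_length' [] ys) _

@[simp] theorem levenshtein_cons_nil (x : α) (xs : List α) :
    levenshtein C (x :: xs) [] = C.delete x + levenshtein C xs [] :=
  rfl

@[simp] theorem levenshtein_cons_cons (x : α) (xs : List α) (y : β) (ys : List β) :
    levenshtein C (x :: xs) (y :: ys) =
      min (C.delete x + levenshtein C xs (y :: ys))
        (min (C.insert y + levenshtein C (x :: xs) ys)
          (C.substitute x y + levenshtein C xs ys)) := by
  have key : ∀ (s : {r : List δ // 0 < r.length}) (t : {r : List δ // 0 < r.length})
      (_ht : t = ⟨levenshtein C (x :: xs) ys :: s.1, by simp⟩) w2 w3,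
      (impl C (x :: xs) y t).1[0]'w2 =
        min (C.delete x + (impl C xs y s).1[0]'w3)
          (min (C.insert y + levenshtein C (x :: xs) ys) (C.substitute x y + s.1[0]'s.2)) := by
    rintro ⟨r, w⟩ t rfl w2 w3
    match r, w with
    | a :: r', _ => rfl
  exact key (suffixLevenshtein C xs ys) _ (suffixLevenshtein_cons₁' x xs ys) _
    (by rw [Levenshtein.impl_length' _ _ _ (suffixLevenshtein_length' xs ys)]; omega)

end LevenshteinAPI

namespace EDAux

lemma ed_nil_right (a : List ℕ) : editDist a [] = a.length := by
  induction a with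
  | nil => simp [editDist]
  | cons x xs ih => simp [editDist, levenshtein_cons_nil] at ih ⊢; omega

lemma ed_nil_left (b : List ℕ) : editDist [] b = b.length := by
  induction b with
  | nil => simp [editDist]
  | cons y ys ih => simp [editDist, levenshtein_nil_cons] at ih ⊢; omega

lemma ed_le_insert (a : List ℕ) (y : ℕ) (ys : List ℕ) :
    editDist a (y :: ys) ≤ 1 + editDist a ys := by
  cases a with
  | nil => simp [editDist]
  | cons x xs => simp only [editDist, levenshtein_cons_cons]; simp

lemma ed_le_delete (x : ℕ) (xs b : List ℕ) :
    editDist (x :: xs) b ≤ 1 + editDist xs b := by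
  cases b with
  | nil => simp [editDist]
  | cons y ys => simp only [editDist, levenshtein_cons_cons]; simp

lemma ed_le_sub (x : ℕ) (xs : List ℕ) (y : ℕ) (ys : List ℕ) :
    editDist (x :: xs) (y :: ys) ≤ (if x = y then 0 else 1) + editDist xs ys := by
  simp only [editDist, levenshtein_cons_cons]
  exact le_trans (min_le_right _ _) (le_trans (min_le_right _ _) (by simp))

lemma ed_cons_cons (x : ℕ) (xs : List ℕ) (y : ℕ) (ys : List ℕ) :
    editDist (x :: xs) (y :: ys) =
      min (1 + editDist xs (y :: ys))
        (min (1 + editDist (x :: xs) ys)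
          ((if x = y then 0 else 1) + editDist xs ys)) := by
  simp [editDist, levenshtein_cons_cons]

lemma ed_append_le (a b u v : List ℕ) :
    editDist (a ++ b) (u ++ v) ≤ editDist a u + editDist b v := by
  induction a generalizing u with
  | nil =>
    induction u with
    | nil => simp [editDist]
    | cons y ys ih =>
      simp only [List.nil_append] at *
      calc editDist b (y :: (ys ++ v)) ≤ 1 + editDist b (ys ++ v) := ed_le_insert ..
        _ ≤ 1 + (editDist [] ys + editDist b v) := by omega
        _ = editDist [] (y :: ys) + editDist b v := by
            simp [ed_nil_left]; ring
  | cons x xs ihx =>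
    induction u with
    | nil =>
      simp only [List.nil_append, List.cons_append] at *
      calc editDist (x :: (xs ++ b)) v ≤ 1 + editDist (xs ++ b) v := ed_le_delete ..
        _ ≤ 1 + (editDist xs [] + editDist b v) := by
            have := ihx ([] : List ℕ); simp only [List.nil_append, List.append_nil] at this; omega
        _ = editDist (x :: xs) [] + editDist b v := by
            simp [ed_nil_right]; ring
    | cons y ys ihy =>
      simp only [List.cons_append]
      rw [show editDist (x :: xs) (y :: ys) + editDist b v = _ from rfl]
      rcases min_choice (1 + editDist xs (y :: ys))
          (min (1 + editDist (x :: xs) ys) ((if x = y then 0 else 1) + editDist xs ys)) with h | h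
      · rw [ed_cons_cons x xs y ys, h]
        calc editDist (x :: (xs ++ b)) (y :: (ys ++ v))
            ≤ 1 + editDist (xs ++ b) (y :: (ys ++ v)) := ed_le_delete ..
          _ ≤ 1 + (editDist xs (y :: ys) + editDist b v) := by
              have := ihx (y :: ys); simp only [List.cons_append] at this; omega
          _ = 1 + editDist xs (y :: ys) + editDist b v := by ring
      · rcases min_choice (1 + editDist (x :: xs) ys)
            ((if x = y then 0 else 1) + editDist xs ys) with h2 | h2
        · rw [ed_cons_cons x xs y ys, h, h2]
          calc editDist (x :: (xs ++ b)) (y :: (ys ++ v))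
              ≤ 1 + editDist (x :: (xs ++ b)) (ys ++ v) := ed_le_insert ..
            _ ≤ 1 + (editDist (x :: xs) ys + editDist b v) := by
                have := ihy; simp only [List.cons_append] at this; omega
            _ = 1 + editDist (x :: xs) ys + editDist b v := by ring
        · rw [ed_cons_cons x xs y ys, h, h2]
          calc editDist (x :: (xs ++ b)) (y :: (ys ++ v))
              ≤ (if x = y then 0 else 1) + editDist (xs ++ b) (ys ++ v) := ed_le_sub ..
            _ ≤ (if x = y then 0 else 1) + (editDist xs ys + editDist b v) := by
                have := ihx ys; omega
            _ = (if x = y then 0 else 1) + editDist xs ys + editDist b v := by ring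

lemma ed_split (x u v : List ℕ) :
    ∃ a b : List ℕ, x = a ++ b ∧ editDist a u + editDist b v ≤ editDist x (u ++ v) := by
  induction u generalizing x with
  | nil => exact ⟨[], x, by simp, by simp [ed_nil_left]⟩
  | cons y ys ihu =>
    induction x with
    | nil =>
      refine ⟨[], [], by simp, ?_⟩
      simp [ed_nil_left]; omega
    | cons z zs ihx =>
      rcases min_choice (1 + editDist zs (y :: (ys ++ v)))
          (min (1 + editDist (z :: zs) (ys ++ v))
            ((if z = y then 0 else 1) + editDist zs (ys ++ v))) with h | h
      · obtain ⟨a, b, rfl, hle⟩ := ihx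
        refine ⟨z :: a, b, by simp, ?_⟩
        have hx : editDist (z :: (a ++ b)) (y :: (ys ++ v))
            = 1 + editDist (a ++ b) (y :: (ys ++ v)) :=
          (ed_cons_cons z (a ++ b) y (ys ++ v)).trans h
        have hd : editDist (z :: a) (y :: ys) ≤ 1 + editDist a (y :: ys) := ed_le_delete ..
        simp only [List.cons_append] at hle ⊢
        omega
      · rcases min_choice (1 + editDist (z :: zs) (ys ++ v))
            ((if z = y then 0 else 1) + editDist zs (ys ++ v)) with h2 | h2
        · obtain ⟨a, b, hab, hle⟩ := ihu (z :: zs)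
          refine ⟨a, b, hab, ?_⟩
          have hi : editDist a (y :: ys) ≤ 1 + editDist a ys := ed_le_insert ..
          have hx : editDist (z :: zs) (y :: (ys ++ v))
              = 1 + editDist (z :: zs) (ys ++ v) :=
            (ed_cons_cons z zs y (ys ++ v)).trans (h.trans h2)
          simp only [List.cons_append]
          omega
        · obtain ⟨a, b, rfl, hle⟩ := ihu zs
          refine ⟨z :: a, b, by simp, ?_⟩
          have hs : editDist (z :: a) (y :: ys) ≤ (if z = y then 0 else 1) + editDist a ys :=
            ed_le_sub ..
          have hx : editDist (z :: (a ++ b)) (y :: (ys ++ v))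
              = (if z = y then 0 else 1) + editDist (a ++ b) (ys ++ v) :=
            (ed_cons_cons z (a ++ b) y (ys ++ v)).trans (h.trans h2)
          simp only [List.cons_append]
          omega



lemma ed_replicate_ge (n : ℕ) : ∀ a : List ℕ, (∀ c ∈ a, c ≠ 7) →
    n ≤ editDist a (List.replicate n 7) := by
  induction n with
  | zero => intro a _; exact Nat.zero_le _
  | succ m ihn =>
    intro a ha
    induction a with
    | nil => simp [ed_nil_left]
    | cons z zs ihz =>
      have hz : z ≠ 7 := ha z (by simp)
      have hzs : ∀ c ∈ zs, c ≠ 7 := fun c hc => ha c (by simp [hc])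
      rw [List.replicate_succ, ed_cons_cons]
      have h1 := ihz hzs
      rw [List.replicate_succ] at h1
      have h2 := ihn (z :: zs) ha
      have h3 := ihn zs hzs
      simp only [if_neg hz]
      omega

lemma ed_replicate_le (a : List ℕ) (n : ℕ) (h : a.length ≤ n) :
    editDist a (List.replicate n 7) ≤ n := by
  induction a generalizing n with
  | nil => simp [ed_nil_left]
  | cons z zs ih =>
    cases n with
    | zero => simp at h
    | succ m =>
      rw [List.replicate_succ, ed_cons_cons]
      have h3 := ih m (by simpa using h)
      have : (if z = 7 then 0 else 1) + editDist zs (List.replicate m 7) ≤ m + 1 := by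
        split <;> omega
      omega

lemma ed_replicate_eq (a : List ℕ) (n : ℕ) (ha : ∀ c ∈ a, c ≠ 7) (h : a.length ≤ n) :
    editDist a (List.replicate n 7) = n :=
  le_antisymm (ed_replicate_le a n h) (ed_replicate_ge n a ha)

end EDAux


open EDAux in
/-- If `7` occurs neither in `x` nor in `y2`, and
`y = 7^{|x|} ++ y2 ++ 7^{|x|}`, then
`δ(x,y) = 2|x| + min over x = x1 ++ x2 ++ x3 of δ(x2,y2)`. -/
theorem editDist_padded_eq_two_len_add_min
    (x y2 : List ℕ)
    (hx : ∀ c ∈ x, c ≠ 7) (hy2 : ∀ c ∈ y2, c ≠ 7) :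
    editDist x (List.replicate x.length 7 ++ y2 ++ List.replicate x.length 7) =
      2 * x.length +
        sInf { c : ℕ | ∃ x1 x2 x3 : List ℕ, x = x1 ++ x2 ++ x3 ∧
          c = editDist x2 y2 } := by
  set n := x.length with hn
  set R := List.replicate n 7 with hR
  set S := { c : ℕ | ∃ x1 x2 x3 : List ℕ, x = x1 ++ x2 ++ x3 ∧ c = editDist x2 y2 } with hS
  have hne : S.Nonempty := ⟨editDist [] y2, [], [], x, by simp, rfl⟩
  apply le_antisymm
  · obtain ⟨x1, x2, x3, hsplit, hc⟩ := Nat.sInf_mem hne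
    have hlen : x1.length + x2.length + x3.length = n := by
      rw [hn, hsplit]; simp; ring
    calc editDist x (R ++ y2 ++ R)
        = editDist (x1 ++ x2 ++ x3) (R ++ y2 ++ R) := by rw [← hsplit]
      _ ≤ editDist (x1 ++ x2) (R ++ y2) + editDist x3 R := ed_append_le ..
      _ ≤ (editDist x1 R + editDist x2 y2) + editDist x3 R :=
          Nat.add_le_add_right (ed_append_le ..) _
      _ ≤ (n + sInf S) + n := by
          have h1 : editDist x1 R ≤ n := ed_replicate_le _ _ (by omega)
          have h3 : editDist x3 R ≤ n := ed_replicate_le _ _ (by omega)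
          omega
      _ = 2 * n + sInf S := by ring
  · obtain ⟨a, b, hab, h1⟩ := ed_split x (R ++ y2) R
    obtain ⟨a1, a2, ha12, h2⟩ := ed_split a R y2
    have hxsplit : x = a1 ++ a2 ++ b := by rw [hab, ha12]
    have hmem : editDist a2 y2 ∈ S := ⟨a1, a2, b, hxsplit, rfl⟩
    have hinf : sInf S ≤ editDist a2 y2 := Nat.sInf_le hmem
    have ha1 : editDist a1 R = n := by
      apply ed_replicate_eq
      · intro c hc; exact hx c (by rw [hxsplit]; simp [hc])
      · have := congrArg List.length hxsplit; simp at this; omega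
    have hb : editDist b R = n := by
      apply ed_replicate_eq
      · intro c hc; exact hx c (by rw [hxsplit]; simp [hc])
      · have := congrArg List.length hxsplit; simp at this; omega
    omega
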